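/- Suppose agents have matroid rank valuations and X is a non-redundant allocation that Lorenz dominates every other allocation. Then X is envy-free up to any good (EFX): for all agents i, j with v_i(X_i) < v_i(X_j), for every g ∈ X_j we have v_i(X_i) ≥ v_i(X_j \ {g}). -/

import Mathlib

def IsMRF {G : Type*} [DecidableEq G] (v : Finset G → ℕ) : Prop :=
  v ∅ = 0 ∧
  (∀ (S : Finset G) (g : G), v (insert g S) = v S ∨ v (insert g S) = v S + 1) ∧
  (∀ (S T : Finset G) (g : G), S ⊆ T → g ∉ T →
    v (insert g T) + v S ≤ v (insert g S) + v T)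

/-- An allocation: bundles are pairwise disjoint (goods may be left unallocated). -/
def IsAlloc {G : Type*} [DecidableEq G] {n : ℕ} (X : Fin n → Finset G) : Prop :=
  ∀ i j, i ≠ j → Disjoint (X i) (X j)

/-- The utility vector sorted in ascending order. -/
def sortedAsc {n : ℕ} (u : Fin n → ℕ) : List ℕ :=
  Multiset.sort (Multiset.ofList (List.ofFn u)) (· ≤ ·)

/-- `u` Lorenz dominates `w`. -/
def LorenzDom {n : ℕ} (u w : Fin n → ℕ) : Prop :=
  ∀ k ≤ n, ((sortedAsc w).take k).sum ≤ ((sortedAsc u).take k).sum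

private lemma le_of_le_cons_of_not_mem {a : ℕ} {s t : Multiset ℕ}
    (h : s ≤ a ::ₘ t) (ha : a ∉ s) : s ≤ t := by
  rw [Multiset.le_iff_count] at h ⊢
  intro c
  have := h c
  rcases eq_or_ne c a with rfl | hca
  · simpa [Multiset.count_eq_zero_of_notMem ha] using Nat.zero_le _
  · simpa [Multiset.count_cons, hca] using this

private lemma sorted_take_sum_le : ∀ (L : List ℕ), L.Pairwise (· ≤ ·) →
    ∀ (M : List ℕ), M.Pairwise (· ≤ ·) → (M : Multiset ℕ) ≤ (L : Multiset ℕ) →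
    ((L.take M.length).sum ≤ M.sum) := by
  intro L
  induction L with
  | nil =>
    intro _ M _ hle
    have : (M : Multiset ℕ) = 0 := le_antisymm (by simpa using hle) (Multiset.zero_le _)
    have : M = [] := by simpa using this
    simp [this]
  | cons x L ih =>
    intro hL M hM hle
    match M with
    | [] => simp
    | y :: M' =>
      obtain ⟨hx, hL'⟩ := List.pairwise_cons.mp hL
      obtain ⟨hy, hM'⟩ := List.pairwise_cons.mp hM
      have hxy : x ≤ y := by
        have hmem : y ∈ (x :: L : List ℕ) := by
          have : y ∈ ((x :: L : List ℕ) : Multiset ℕ) :=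
            Multiset.mem_of_le hle (by simp)
          simpa using this
        rcases List.mem_cons.mp hmem with rfl | hmem
        · exact le_rfl
        · exact hx _ hmem
      by_cases hxm : x ∈ (y :: M' : List ℕ)
      · have hyx : y ≤ x := by
          rcases List.mem_cons.mp hxm with rfl | hmem
          · exact le_rfl
          · exact hy _ hmem
        have hxy' : x = y := le_antisymm hxy hyx
        subst hxy'
        have hM'le : (M' : Multiset ℕ) ≤ (L : Multiset ℕ) := by
          have : (x ::ₘ (M' : Multiset ℕ)) ≤ (x ::ₘ (L : Multiset ℕ)) := by
            simpa [← Multiset.cons_coe] using hle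
          exact (Multiset.cons_le_cons_iff x).mp this
        have := ih hL' M' hM' hM'le
        simpa [List.take, List.sum_cons] using Nat.add_le_add_left this x
      · have hMle : ((y :: M' : List ℕ) : Multiset ℕ) ≤ (L : Multiset ℕ) := by
          apply le_of_le_cons_of_not_mem (a := x) _ (by simpa using hxm)
          simpa [← Multiset.cons_coe] using hle
        have ihh := ih hL' (y :: M') hM hMle
        have hlen : M'.length + 1 ≤ L.length := by
          simpa using Multiset.card_le_card hMle
        have hlt : M'.length < L.length := by omega
        have hsplit := List.sum_take_succ L M'.length hlt
        have hxle : x ≤ L[M'.length] := hx _ (List.getElem_mem hlt)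
        simp only [List.length_cons, List.take_succ_cons, List.sum_cons]
        simp only [List.length_cons, List.sum_cons] at ihh
        omega


private lemma coe_sortedAsc {n : ℕ} (u : Fin n → ℕ) :
    ((sortedAsc u : List ℕ) : Multiset ℕ) = Multiset.map u Finset.univ.val := by
  rw [sortedAsc, Multiset.sort_eq]
  rw [Fin.univ_val_map]

private lemma length_sortedAsc {n : ℕ} (u : Fin n → ℕ) : (sortedAsc u).length = n := by
  have := congrArg Multiset.card (coe_sortedAsc u)
  simpa using this

/-- prefix sum of sorted list is at most any subset sum. -/
private lemma take_sum_le_finset {n : ℕ} (u : Fin n → ℕ) (S : Finset (Fin n)) :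
    ((sortedAsc u).take S.card).sum ≤ ∑ l ∈ S, u l := by
  set M : List ℕ := Multiset.sort (Multiset.map u S.val) (· ≤ ·) with hM
  have hMs : M.Pairwise (· ≤ ·) := Multiset.pairwise_sort _ _
  have hMc : (M : Multiset ℕ) = Multiset.map u S.val := Multiset.sort_eq _ _
  have hML : (M : Multiset ℕ) ≤ ((sortedAsc u : List ℕ) : Multiset ℕ) := by
    rw [hMc, coe_sortedAsc]
    exact Multiset.map_le_map (Finset.val_le_iff.mpr (Finset.subset_univ S))
  have hlen : M.length = S.card := by
    have := congrArg Multiset.card hMc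
    simpa using this
  have h := sorted_take_sum_le _ (Multiset.pairwise_sort _ _) M hMs hML
  rw [hlen] at h
  have hsum : M.sum = ∑ l ∈ S, u l := by
    have h2 := congrArg Multiset.sum hMc
    rw [Multiset.sum_coe] at h2
    rw [h2, Finset.sum]
  exact hsum ▸ h

/-- lower bound: any size-(t.card+1) submultiset of s where the small part fits in t. -/
private lemma lower_bound_lemma (s t : Multiset ℕ) (a : ℕ)
    (hft : s.filter (· ≤ a) ≤ t) (hta : ∀ x ∈ t, x ≤ a)
    (hcard : Multiset.card t + 1 ≤ Multiset.card s) :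
    t.sum + (a + 1) ≤ s.sum := by
  classical
  set s₁ := s.filter (· ≤ a) with hs₁
  set s₂ := s.filter (fun x => ¬ x ≤ a) with hs₂
  have hsplit : s₁ + s₂ = s := Multiset.filter_add_not _ s
  have hsum : s.sum = s₁.sum + s₂.sum := by rw [← hsplit, Multiset.sum_add]
  have hcards : Multiset.card s = Multiset.card s₁ + Multiset.card s₂ := by
    rw [← hsplit, Multiset.card_add]
  obtain ⟨d, hd⟩ := Multiset.le_iff_exists_add.mp hft
  have hdsum : t.sum = s₁.sum + d.sum := by rw [hd, Multiset.sum_add]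
  have hdcard : Multiset.card t = Multiset.card s₁ + Multiset.card d := by
    rw [hd, Multiset.card_add]
  have hdle : d.sum ≤ Multiset.card d * a := by
    have : ∀ x ∈ d, x ≤ a := fun x hx => hta x (by rw [hd]; exact Multiset.mem_add.mpr (Or.inr hx))
    have h3 := Multiset.sum_le_card_nsmul d a this
    simpa [smul_eq_mul] using h3
  have hs₂le : (Multiset.card d + 1) * (a + 1) ≤ s₂.sum := by
    have h1 : ∀ x ∈ s₂, a + 1 ≤ x := by
      intro x hx
      have := Multiset.of_mem_filter hx
      omega
    have h2 : Multiset.card d + 1 ≤ Multiset.card s₂ := by omega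
    calc (Multiset.card d + 1) * (a + 1) ≤ Multiset.card s₂ * (a+1) := by
          exact Nat.mul_le_mul_right _ h2
    _ = Multiset.card s₂ • (a+1) := by simp [smul_eq_mul]
    _ ≤ s₂.sum := Multiset.card_nsmul_le_sum h1
  have expand : (Multiset.card d + 1) * (a + 1) = Multiset.card d * a + Multiset.card d + a + 1 := by ring
  omega

section Matroid
variable {G : Type*} [DecidableEq G] {v : Finset G → ℕ}

private lemma mrf_union_le (hb : ∀ (S : Finset G) (g : G), v (insert g S) = v S ∨ v (insert g S) = v S + 1)
    (S U : Finset G) : v S ≤ v (S ∪ U) := by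
  classical
  induction U using Finset.induction_on with
  | empty => simp
  | @insert t U' _ ih =>
    rw [Finset.union_insert]
    rcases hb (S ∪ U') t with h | h <;> omega
  
private lemma mrf_mono (hb : ∀ (S : Finset G) (g : G), v (insert g S) = v S ∨ v (insert g S) = v S + 1)
    {S T : Finset G} (h : S ⊆ T) : v S ≤ v T := by
  have := mrf_union_le hb S T
  rwa [Finset.union_eq_right.mpr h] at this

private lemma mrf_card_le (h0 : v ∅ = 0)
    (hb : ∀ (S : Finset G) (g : G), v (insert g S) = v S ∨ v (insert g S) = v S + 1)
    (U : Finset G) : v U ≤ U.card := by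
  classical
  induction U using Finset.induction_on with
  | empty => simp [h0]
  | @insert t U' hnm ih =>
    rw [Finset.card_insert_of_notMem hnm]
    rcases hb U' t with h | h <;> omega

private lemma mrf_aug (h0 : v ∅ = 0)
    (hb : ∀ (S : Finset G) (g : G), v (insert g S) = v S ∨ v (insert g S) = v S + 1)
    (hs : ∀ (S T : Finset G) (g : G), S ⊆ T → g ∉ T →
      v (insert g T) + v S ≤ v (insert g S) + v T)
    (T : Finset G) : ∀ S : Finset G, v S < v (S ∪ T) → ∃ g ∈ T, v (insert g S) = v S + 1 := by
  classical
  induction T using Finset.induction_on with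
  | empty => intro S h; simp at h
  | @insert t T' hnm ih =>
    intro S h
    by_cases hlt : v S < v (S ∪ T')
    · obtain ⟨g, hg, hgv⟩ := ih S hlt
      exact ⟨g, Finset.mem_insert_of_mem hg, hgv⟩
    · push_neg at hlt
      rw [Finset.union_insert] at h
      have htm : t ∉ S ∪ T' := by
        intro hmem
        rw [Finset.insert_eq_self.mpr hmem] at h
        omega
      have h1 : v (insert t (S ∪ T')) = v (S ∪ T') + 1 := by
        rcases hb (S ∪ T') t with h' | h' <;> omega
      have h2 := hs S (S ∪ T') t Finset.subset_union_left htm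
      have h3 : v S ≤ v (insert t S) := by
        rcases hb S t with h' | h' <;> omega
      have h4 : v (insert t S) ≤ v S + 1 := by
        rcases hb S t with h' | h' <;> omega
      exact ⟨t, Finset.mem_insert_self _ _, by omega⟩
end Matroid

theorem lorenz_dominating_is_EFX {G : Type*} [DecidableEq G] [Fintype G] {n : ℕ}
    (v : Fin n → Finset G → ℕ) (hv : ∀ i, IsMRF (v i))
    (X : Fin n → Finset G) (hX : IsAlloc X)
    (hXnr : ∀ i, v i (X i) = (X i).card)
    (hdom : ∀ Y : Fin n → Finset G, IsAlloc Y →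
      LorenzDom (fun i => v i (X i)) (fun i => v i (Y i))) :
    ∀ i j, v i (X i) < v i (X j) →
      ∀ g ∈ X j, v i ((X j).erase g) ≤ v i (X i) := by
  classical
  intro i j hij
  by_contra hcon
  push_neg at hcon
  obtain ⟨g, hg, hcon⟩ := hcon
  obtain ⟨h0i, hbi, hsi⟩ := hv i
  obtain ⟨h0j, hbj, hsj⟩ := hv j
  have hne : i ≠ j := by rintro rfl; exact lt_irrefl _ hij
  set a := v i (X i) with ha
  have hlt : v i (X i) < v i (X i ∪ (X j).erase g) :=
    lt_of_lt_of_le hcon (mrf_mono hbi Finset.subset_union_right)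
  obtain ⟨h, hhT, hh⟩ := mrf_aug h0i hbi hsi ((X j).erase g) (X i) hlt
  have hhXj : h ∈ X j := Finset.mem_of_mem_erase hhT
  have hkey : ∀ l, l ≠ j → h ∉ X l := by
    intro l hl
    exact Finset.disjoint_left.mp (hX j l (fun e => hl e.symm)) hhXj
  have hhXi : h ∉ X i := hkey i hne
  set Y : Fin n → Finset G :=
    fun l => if l = i then insert h (X i) else if l = j then (X j).erase h else X l with hY
  have hYi : Y i = insert h (X i) := by simp [hY]
  have hYj : Y j = (X j).erase h := by simp [hY, hne.symm]
  have hYo : ∀ l, l ≠ i → l ≠ j → Y l = X l := by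
    intro l h1 h2; simp [hY, h1, h2]
  have hYalloc : IsAlloc Y := by
    intro p q hpq
    have dij : Disjoint (insert h (X i)) ((X j).erase h) :=
      Finset.disjoint_insert_left.mpr
        ⟨Finset.notMem_erase _ _,
         Finset.disjoint_of_subset_right (Finset.erase_subset _ _) (hX i j hne)⟩
    have dio : ∀ l, l ≠ i → l ≠ j → Disjoint (insert h (X i)) (X l) := by
      intro l h1 h2
      exact Finset.disjoint_insert_left.mpr ⟨hkey l h2, hX i l (fun e => h1 e.symm)⟩
    have djo : ∀ l, l ≠ j → Disjoint ((X j).erase h) (X l) :=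
      fun l h2 => Finset.disjoint_of_subset_left (Finset.erase_subset _ _)
        (hX j l (fun e => h2 e.symm))
    by_cases hp : p = i
    · subst hp
      rw [hYi]
      by_cases hq : q = j
      · subst hq; rw [hYj]; exact dij
      · rw [hYo q (Ne.symm hpq) hq]; exact dio q (Ne.symm hpq) hq
    · by_cases hp2 : p = j
      · subst hp2
        rw [hYj]
        by_cases hq : q = i
        · subst hq; rw [hYi]; exact dij.symm
        · rw [hYo q hq (Ne.symm hpq)]; exact djo q (Ne.symm hpq)
      · rw [hYo p hp hp2]
        by_cases hq : q = i
        · subst hq; rw [hYi]; exact (dio p hp hp2).symm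
        · by_cases hq2 : q = j
          · subst hq2; rw [hYj]; exact (djo p hp2).symm
          · rw [hYo q hq hq2]; exact hX p q hpq
  set u : Fin n → ℕ := fun l => v l (X l) with hu
  set w : Fin n → ℕ := fun l => v l (Y l) with hw
  have hwi : w i = a + 1 := by rw [hw]; simp only; rw [hYi]; exact hh
  have hins : insert h ((X j).erase h) = X j := Finset.insert_erase hhXj
  set b := v j (X j) with hb
  set b' := v j ((X j).erase h) with hb'
  have hwj : w j = b' := by rw [hw]; simp only; rw [hYj]
  have hwo : ∀ l, l ≠ i → l ≠ j → w l = u l := by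
    intro l h1 h2; rw [hw, hu]; simp only; rw [hYo l h1 h2]
  have hb'cases : b = b' ∨ b = b' + 1 := by
    have := hbj ((X j).erase h) h
    rw [hins] at this
    omega
  have hdomY : LorenzDom u w := hdom Y hYalloc
  -- key numeric facts
  have hcard1 : 1 ≤ (X j).card := Finset.card_pos.mpr ⟨g, hg⟩
  have hbcard : b = (X j).card := hXnr j
  have hvTle : v i ((X j).erase g) ≤ (X j).card - 1 := by
    have h1 := mrf_card_le h0i hbi ((X j).erase g)
    rwa [Finset.card_erase_of_mem hg] at h1
  have hab : a + 2 ≤ b := by omega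
  -- total sum facts
  have hsum_sorted : ∀ z : Fin n → ℕ, (sortedAsc z).sum = ∑ l, z l := by
    intro z
    have h1 := congrArg Multiset.sum (coe_sortedAsc z)
    rw [Multiset.sum_coe] at h1
    rw [h1, Finset.sum]
  have htake_all : ∀ z : Fin n → ℕ, (sortedAsc z).take n = sortedAsc z := by
    intro z
    exact List.take_of_length_le (le_of_eq (length_sortedAsc z))
  rcases hb'cases with hbb | hbb
  · -- case b = b' : total sum increases
    have hsw : ∑ l, w l = ∑ l, u l + 1 := by
      have e1 : ∑ l ∈ Finset.univ.erase i, w l = ∑ l ∈ Finset.univ.erase i, u l := by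
        apply Finset.sum_congr rfl
        intro l hl
        have hli : l ≠ i := (Finset.mem_erase.mp hl).1
        by_cases hlj : l = j
        · subst hlj; rw [hwj, ← hbb, hu]
        · exact hwo l hli hlj
      have e2 : w i + ∑ l ∈ Finset.univ.erase i, w l = ∑ l, w l :=
        Finset.add_sum_erase Finset.univ w (Finset.mem_univ i)
      have e3 : u i + ∑ l ∈ Finset.univ.erase i, u l = ∑ l, u l :=
        Finset.add_sum_erase Finset.univ u (Finset.mem_univ i)
      have : u i = a := rfl
      omega
    have hd := hdomY n le_rfl
    rw [htake_all, htake_all, hsum_sorted, hsum_sorted] at hd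
    omega
  · -- case b = b' + 1 : Pigou-Dalton violation
    have hwjval : w j = b' := hwj
    have hwjge : a + 1 ≤ w j := by omega
    set A : Finset (Fin n) := Finset.univ.filter (fun l => u l ≤ a) with hA
    have hiA : i ∈ A := by simp [hA, hu]; exact le_rfl
    have hjA : j ∉ A := by
      simp only [hA, Finset.mem_filter, Finset.mem_univ, true_and, not_le]
      show a < u j
      have : u j = b := rfl
      omega
    set k := A.card with hk
    have hkn : k ≤ n := by
      have := Finset.card_le_card (Finset.subset_univ A)
      simpa using this
    set A' := A.erase i with hA'
    have hkA' : A'.card + 1 = k := by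
      rw [hA', Finset.card_erase_of_mem hiA]
      have : 1 ≤ A.card := Finset.card_pos.mpr ⟨i, hiA⟩
      omega
    have hsumA : ∑ l ∈ A, u l = ∑ l ∈ A', u l + a := by
      have h5 : u i + ∑ x ∈ A', u x = ∑ x ∈ A, u x := Finset.add_sum_erase A u hiA
      have hui : u i = a := rfl
      omega
    -- upper bound on prefix of sorted u
    have hupper : ((sortedAsc u).take k).sum ≤ ∑ l ∈ A, u l := take_sum_le_finset u A
    -- lower bound on prefix of sorted w
    set t : Multiset ℕ := Multiset.map u A'.val with ht
    have htsum : t.sum = ∑ l ∈ A', u l := by rw [ht, Finset.sum]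
    have htcard : Multiset.card t = A'.card := by simp [ht]
    have hta : ∀ x ∈ t, x ≤ a := by
      intro x hx
      rw [ht] at hx
      obtain ⟨l, hl, rfl⟩ := Multiset.mem_map.mp hx
      have : l ∈ A := Finset.mem_of_mem_erase (by exact hl)
      exact (Finset.mem_filter.mp this).2
    set s : Multiset ℕ := Multiset.ofList ((sortedAsc w).take k) with hs
    have hscard : Multiset.card s = k := by
      rw [hs]
      simp only [Multiset.coe_card, List.length_take, length_sortedAsc]
      omega
    have hsle : s ≤ Multiset.map w Finset.univ.val := by
      rw [hs, ← coe_sortedAsc]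
      exact (List.take_sublist _ _).subperm
    -- the filter set equality
    have hfilt : Finset.univ.filter (fun l => w l ≤ a) = A' := by
      ext l
      simp only [Finset.mem_filter, Finset.mem_univ, true_and, hA', Finset.mem_erase, hA]
      constructor
      · intro hwl
        have hli : l ≠ i := by
          rintro rfl
          rw [hwi] at hwl
          omega
        have hlj : l ≠ j := by
          intro hlj'
          rw [hlj'] at hwl
          omega
        rw [hwo l hli hlj] at hwl
        exact ⟨hli, hwl⟩
      · rintro ⟨hli, hwl⟩
        have hlj : l ≠ j := by
          intro hlj'
          rw [hlj'] at hwl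
          have : u j = b := rfl
          omega
        rw [hwo l hli hlj]
        exact hwl
    have hft : s.filter (· ≤ a) ≤ t := by
      have h1 : s.filter (· ≤ a) ≤ (Multiset.map w Finset.univ.val).filter (· ≤ a) :=
        Multiset.filter_le_filter _ hsle
      have h2 : (Multiset.map w Finset.univ.val).filter (· ≤ a)
          = Multiset.map w (Finset.univ.val.filter (fun l => w l ≤ a)) := by
        rw [Multiset.filter_map]
        rfl
      have h3 : Finset.univ.val.filter (fun l => w l ≤ a) = A'.val := by
        have := congrArg Finset.val hfilt
        simpa [Finset.filter_val] using this
      have h4 : Multiset.map w A'.val = t := by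
        rw [ht]
        apply Multiset.map_congr rfl
        intro l hl
        have hlA' : l ∈ A' := hl
        have hli : l ≠ i := (Finset.mem_erase.mp hlA').1
        have hlj : l ≠ j := by
          rintro rfl
          exact hjA (Finset.mem_of_mem_erase hlA')
        exact hwo l hli hlj
      rw [h2, h3, h4] at h1
      exact h1
    have hlow := lower_bound_lemma s t a hft hta (by omega)
    have hssum : s.sum = ((sortedAsc w).take k).sum := by
      rw [hs, Multiset.sum_coe]
    have hd := hdomY k hkn
    omega
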